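/- For the closed discrete subgroup H = {(-x,x) : x ∈ ℚ} of G = 𝕃² (the square of the Sorgenfrey line), the quotient group G/H with the quotient topology is not Hausdorff: for any irrational x, the coset (-x,x)+H cannot be separated from the identity coset by disjoint open sets. -/

import Mathlib

/-- The Sorgenfrey topology on the real line, generated by half-open intervals `[a, b)`. -/
def sorgenfrey : TopologicalSpace ℝ :=
  TopologicalSpace.generateFrom {s : Set ℝ | ∃ a b : ℝ, a < b ∧ s = Set.Ico a b}

/-- The subgroup `H = {(-x, x) : x ∈ ℚ}` of `ℝ × ℝ`. -/
noncomputable def Hsub : AddSubgroup (ℝ × ℝ) :=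
  AddMonoidHom.range
    (AddMonoidHom.prod (-(Rat.castHom ℝ).toAddMonoidHom) (Rat.castHom ℝ).toAddMonoidHom)

lemma sorgenfrey_mem (u : Set ℝ) (hu : sorgenfrey.IsOpen u) :
    ∀ a ∈ u, ∃ b, a < b ∧ Set.Ico a b ⊆ u := by
  have h : TopologicalSpace.GenerateOpen {s : Set ℝ | ∃ a b : ℝ, a < b ∧ s = Set.Ico a b} u := hu
  clear hu
  induction h with
  | basic s hs =>
    obtain ⟨c, d, hcd, rfl⟩ := hs
    intro a ha
    exact ⟨d, ha.2, fun y hy => ⟨le_trans ha.1 hy.1, hy.2⟩⟩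
  | univ =>
    intro a _
    exact ⟨a + 1, by linarith, fun _ _ => trivial⟩
  | inter s t _ _ ihs iht =>
    intro a ha
    obtain ⟨b1, hb1, h1⟩ := ihs a ha.1
    obtain ⟨b2, hb2, h2⟩ := iht a ha.2
    exact ⟨min b1 b2, lt_min hb1 hb2, fun y hy =>
      ⟨h1 ⟨hy.1, hy.2.trans_le (min_le_left _ _)⟩,
       h2 ⟨hy.1, hy.2.trans_le (min_le_right _ _)⟩⟩⟩
  | sUnion S _ ih =>
    intro a ha
    obtain ⟨s, hsS, has⟩ := ha
    obtain ⟨b, hb, h⟩ := ih s hsS a has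
    exact ⟨b, hb, fun y hy => ⟨s, hsS, h hy⟩⟩

lemma prod_box :
    letI : TopologicalSpace ℝ := sorgenfrey
    ∀ s : Set (ℝ × ℝ), IsOpen s → ∀ p ∈ s,
      ∃ ε > 0, Set.Ico p.1 (p.1 + ε) ×ˢ Set.Ico p.2 (p.2 + ε) ⊆ s := by
  letI : TopologicalSpace ℝ := sorgenfrey
  intro s hs p hp
  rw [isOpen_prod_iff] at hs
  obtain ⟨u, v, hu, hv, hpu, hpv, huv⟩ := hs p.1 p.2 hp
  obtain ⟨b1, hb1, h1⟩ := sorgenfrey_mem u hu p.1 hpu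
  obtain ⟨b2, hb2, h2⟩ := sorgenfrey_mem v hv p.2 hpv
  refine ⟨min (b1 - p.1) (b2 - p.2), lt_min (by linarith) (by linarith), ?_⟩
  rintro ⟨y1, y2⟩ ⟨hy1, hy2⟩
  refine huv ⟨h1 ⟨hy1.1, ?_⟩, h2 ⟨hy2.1, ?_⟩⟩
  · have := hy1.2.trans_le (add_le_add_right (min_le_left _ _) _)
    linarith
  · have := hy2.2.trans_le (add_le_add_right (min_le_right _ _) _)
    linarith

lemma key :
    letI : TopologicalSpace ℝ := sorgenfrey
    ∀ x : ℝ, Irrational x →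
      ∀ U V : Set ((ℝ × ℝ) ⧸ Hsub), IsOpen U → IsOpen V →
        (QuotientAddGroup.mk (-x, x) ∈ U) → (QuotientAddGroup.mk ((0 : ℝ), (0 : ℝ)) ∈ V) →
          (U ∩ V).Nonempty := by
  letI : TopologicalSpace ℝ := sorgenfrey
  intro x _ U V hU hV hxU h0V
  have hU' : IsOpen ((QuotientAddGroup.mk : ℝ × ℝ → (ℝ × ℝ) ⧸ Hsub) ⁻¹' U) :=
    hU.preimage continuous_quot_mk
  have hV' : IsOpen ((QuotientAddGroup.mk : ℝ × ℝ → (ℝ × ℝ) ⧸ Hsub) ⁻¹' V) :=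
    hV.preimage continuous_quot_mk
  obtain ⟨ε, hε, hbU⟩ := prod_box _ hU' (-x, x) hxU
  obtain ⟨δ, hδ, hbV⟩ := prod_box _ hV' (0, 0) h0V
  obtain ⟨q, hq1, hq2⟩ := exists_rat_btwn (sub_lt_self x (lt_min hε hδ))
  have hqδ : x - δ < (q : ℝ) := by
    have h1 : x - min ε δ < (q : ℝ) := hq1
    have h2 : min ε δ ≤ δ := min_le_right _ _
    linarith
  have hqε : x - ε < (q : ℝ) := by
    have h1 : x - min ε δ < (q : ℝ) := hq1
    have h2 : min ε δ ≤ ε := min_le_left _ _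
    linarith
  refine ⟨QuotientAddGroup.mk ((-(q : ℝ)), x), ?_, ?_⟩
  · -- in U : (-q, x) is in the box around (-x, x)
    refine hbU ⟨⟨?_, ?_⟩, ⟨?_, ?_⟩⟩ <;> simp <;> linarith
  · -- in V : coset equals that of (0, x - q), which is in the box around (0,0)
    have heq : (QuotientAddGroup.mk ((-(q : ℝ)), x) : (ℝ × ℝ) ⧸ Hsub)
        = QuotientAddGroup.mk ((0 : ℝ), x - (q : ℝ)) := by
      rw [QuotientAddGroup.eq]
      refine ⟨-q, ?_⟩
      apply Prod.ext <;> simp <;> ring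
    rw [heq]
    refine hbV ⟨⟨?_, ?_⟩, ⟨?_, ?_⟩⟩ <;> simp <;> linarith

theorem stmt_2 :
    letI : TopologicalSpace ℝ := sorgenfrey
    (¬ T2Space ((ℝ × ℝ) ⧸ Hsub)) ∧
      ∀ x : ℝ, Irrational x →
        ∀ U V : Set ((ℝ × ℝ) ⧸ Hsub), IsOpen U → IsOpen V →
          (QuotientAddGroup.mk (-x, x) ∈ U) → (QuotientAddGroup.mk ((0 : ℝ), (0 : ℝ)) ∈ V) →
            (U ∩ V).Nonempty := by
  letI : TopologicalSpace ℝ := sorgenfrey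
  refine ⟨?_, key⟩
  intro hT2
  have hne : (QuotientAddGroup.mk (-Real.sqrt 2, Real.sqrt 2) : (ℝ × ℝ) ⧸ Hsub)
      ≠ QuotientAddGroup.mk ((0 : ℝ), (0 : ℝ)) := by
    rw [Ne, QuotientAddGroup.eq]
    rintro ⟨r, hr⟩
    rw [Prod.ext_iff] at hr
    have : (r : ℝ) = -Real.sqrt 2 := by
      have h2 := hr.2
      simp at h2
      linarith [h2]
    exact irrational_sqrt_two.neg ⟨r, this⟩
  obtain ⟨U, V, hU, hV, hxU, h0V, hdisj⟩ := t2_separation hne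
  obtain ⟨z, hzU, hzV⟩ := key (Real.sqrt 2) irrational_sqrt_two U V hU hV hxU h0V
  exact hdisj.ne_of_mem hzU hzV rfl
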